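/- For any lossless compressor C : A → {0,1}* (a one-to-one map into finite binary strings) and any random variable X on the finite set A, the expected codeword length satisfies E[ℓ(C(X))] ≥ H(X) - log(e(H(X)+1)), where ℓ denotes the length of the binary string and H is Shannon entropy in bits. -/

import Mathlib

open Finset

/-- Any finset of boolean lists, all of the same length `l`, has at most `2^l` elements. -/
lemma card_fixed_len (l : ℕ) (T : Finset (List Bool)) (h : ∀ s ∈ T, s.length = l) :
    T.card ≤ 2 ^ l := by
  classical
  have h2 : Fintype.card (Fin l → Bool) = 2 ^ l := by simp
  rw [← h2, ← Finset.card_univ]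
  apply Finset.card_le_card_of_injOn (fun s : List Bool => fun i : Fin l => s.getD i false)
    (fun s _ => Finset.mem_univ _)
  intro s hs t ht hst
  apply List.ext_getElem (by rw [h s hs, h t ht])
  intro i hi hi'
  have := congrFun hst ⟨i, by rwa [h s hs] at hi⟩
  simpa [List.getD_eq_getElem?_getD, List.getElem?_eq_getElem, hi, hi'] using this

/-- A Kraft-type bound for arbitrary sets of distinct binary strings. -/
lemma sum_pow_len (T : Finset (List Bool)) (θ : ℝ) (h0 : 0 ≤ θ) (h1 : θ ≤ 1) :
    ∑ s ∈ T, (θ / 2) ^ s.length * (1 - θ) ≤ 1 := by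
  classical
  set m := T.sup List.length with hm
  have hmaps : ∀ s ∈ T, s.length ∈ Finset.range (m + 1) := by
    intro s hs
    simp only [Finset.mem_range, Nat.lt_succ_iff]
    exact Finset.le_sup (f := List.length) hs
  rw [← Finset.sum_fiberwise_of_maps_to hmaps]
  have hstep : ∀ l ∈ Finset.range (m + 1),
      (∑ s ∈ T.filter (fun s => s.length = l), (θ / 2) ^ s.length * (1 - θ))
        ≤ θ ^ l * (1 - θ) := by
    intro l _
    have hcard : (T.filter (fun s => s.length = l)).card ≤ 2 ^ l :=
      card_fixed_len l _ (fun s hs => (Finset.mem_filter.mp hs).2)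
    calc (∑ s ∈ T.filter (fun s => s.length = l), (θ / 2) ^ s.length * (1 - θ))
        = ((T.filter (fun s => s.length = l)).card : ℝ) * ((θ / 2) ^ l * (1 - θ)) := by
          rw [Finset.sum_congr rfl (fun s hs => by
            rw [(Finset.mem_filter.mp hs).2]), Finset.sum_const, nsmul_eq_mul]
      _ ≤ (2 ^ l : ℝ) * ((θ / 2) ^ l * (1 - θ)) := by
          apply mul_le_mul_of_nonneg_right
          · exact_mod_cast hcard
          · exact mul_nonneg (by positivity) (by linarith)
      _ = θ ^ l * (1 - θ) := by
          rw [div_pow]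
          field_simp
  calc _ ≤ ∑ l ∈ Finset.range (m + 1), θ ^ l * (1 - θ) := Finset.sum_le_sum hstep
    _ = 1 - θ ^ (m + 1) := by
        have := geom_sum_mul θ (m + 1)
        rw [← Finset.sum_mul]
        nlinarith [this]
    _ ≤ 1 := by nlinarith [pow_nonneg h0 (m+1)]

/-- Gibbs' inequality. -/
lemma gibbs_aux {A : Type*} [Fintype A] (p q : A → ℝ) (hp0 : ∀ a, 0 ≤ p a)
    (hp1 : ∑ a, p a = 1) (hq0 : ∀ a, 0 ≤ q a) (hq1 : ∑ a, q a ≤ 1)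
    (hqp : ∀ a, p a ≠ 0 → 0 < q a) :
    -∑ a, p a * Real.log (p a) ≤ -∑ a, p a * Real.log (q a) := by
  have key : ∀ a, p a * Real.log (q a) - p a * Real.log (p a) ≤ q a - p a := by
    intro a
    by_cases hpa : p a = 0
    · simp only [hpa, zero_mul, sub_zero]
      exact hq0 a
    · have hp : 0 < p a := lt_of_le_of_ne (hp0 a) (Ne.symm hpa)
      have hq : 0 < q a := hqp a hpa
      have h1 : p a * Real.log (q a) - p a * Real.log (p a)
          = p a * Real.log (q a / p a) := by
        rw [Real.log_div (ne_of_gt hq) (ne_of_gt hp)]; ring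
      rw [h1]
      have h2 : Real.log (q a / p a) ≤ q a / p a - 1 :=
        Real.log_le_sub_one_of_pos (by positivity)
      have h3 := mul_le_mul_of_nonneg_left h2 (le_of_lt hp)
      calc p a * Real.log (q a / p a) ≤ p a * (q a / p a - 1) := h3
        _ = q a - p a := by field_simp
  have hsum : ∑ a, (p a * Real.log (q a) - p a * Real.log (p a)) ≤ ∑ a, (q a - p a) :=
    Finset.sum_le_sum (fun a _ => key a)
  rw [Finset.sum_sub_distrib, Finset.sum_sub_distrib, hp1] at hsum
  linarith

/-- Key estimate in nats: `h ≤ L log 2 + 1 + log (L+1)` for injective codes, when `L > 0`. -/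
lemma key_nats {A : Type*} [Fintype A] (p : A → ℝ) (hp0 : ∀ a, 0 ≤ p a)
    (hp1 : ∑ a, p a = 1) (C : A → List Bool) (hC : Function.Injective C)
    (hL : 0 < ∑ a, p a * ((C a).length : ℝ)) :
    -∑ a, p a * Real.log (p a) ≤
      (∑ a, p a * ((C a).length : ℝ)) * Real.log 2 + 1
        + Real.log ((∑ a, p a * ((C a).length : ℝ)) + 1) := by
  classical
  set L : ℝ := ∑ a, p a * ((C a).length : ℝ) with hLdef
  have hL1 : (0:ℝ) < L + 1 := by linarith
  set θ : ℝ := L / (L + 1) with hθdef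
  have hθ0 : 0 < θ := div_pos hL hL1
  have hθ1 : θ < 1 := (div_lt_one hL1).mpr (by linarith)
  have h1θ : 1 - θ = 1 / (L + 1) := by
    rw [hθdef]; field_simp; ring
  have h1θ0 : 0 < 1 - θ := by rw [h1θ]; positivity
  set q : A → ℝ := fun a => (θ / 2) ^ (C a).length * (1 - θ) with hqdef
  have hq0 : ∀ a, 0 ≤ q a := fun a => mul_nonneg (by positivity) (le_of_lt h1θ0)
  have hqp : ∀ a, p a ≠ 0 → 0 < q a := fun a _ => mul_pos (by positivity) h1θ0
  have hq1 : ∑ a, q a ≤ 1 := by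
    have himg : ∑ s ∈ Finset.image C Finset.univ, (θ / 2) ^ s.length * (1 - θ)
        = ∑ a, q a := by
      rw [Finset.sum_image (fun x _ y _ hxy => hC hxy)]
    rw [← himg]
    exact sum_pow_len _ θ (le_of_lt hθ0) (le_of_lt hθ1)
  have hgibbs := gibbs_aux p q hp0 hp1 hq0 hq1 hqp
  have hlogq : ∀ a, p a * Real.log (q a)
      = p a * ((C a).length : ℝ) * Real.log (θ / 2) + p a * Real.log (1 - θ) := by
    intro a
    rw [hqdef]
    rw [Real.log_mul (by positivity) (ne_of_gt h1θ0), Real.log_pow]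
    ring
  have hsumq : -∑ a, p a * Real.log (q a)
      = -(Real.log (θ / 2)) * L - Real.log (1 - θ) := by
    rw [Finset.sum_congr rfl (fun a _ => hlogq a), Finset.sum_add_distrib,
      ← Finset.sum_mul, ← Finset.sum_mul, hp1, hLdef]
    ring
  have hlog1θ : Real.log (1 - θ) = -Real.log (L + 1) := by
    rw [h1θ, Real.log_div one_ne_zero (ne_of_gt hL1), Real.log_one]
    ring
  have hlogθ2 : Real.log (θ / 2) = Real.log L - Real.log (L + 1) - Real.log 2 := by
    rw [hθdef, Real.log_div (by positivity) (by norm_num),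
      Real.log_div (ne_of_gt hL) (ne_of_gt hL1)]
  have hbound : L * (Real.log (L + 1) - Real.log L) ≤ 1 := by
    have h2 : Real.log ((L + 1) / L) ≤ (L + 1) / L - 1 :=
      Real.log_le_sub_one_of_pos (by positivity)
    rw [Real.log_div (ne_of_gt hL1) (ne_of_gt hL)] at h2
    have h3 : (L + 1) / L - 1 = 1 / L := by field_simp; ring
    rw [h3] at h2
    have h4 := mul_le_mul_of_nonneg_left h2 (le_of_lt hL)
    calc L * (Real.log (L + 1) - Real.log L) ≤ L * (1 / L) := h4
      _ = 1 := by field_simp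
  calc -∑ a, p a * Real.log (p a) ≤ -∑ a, p a * Real.log (q a) := hgibbs
    _ = -(Real.log (θ / 2)) * L - Real.log (1 - θ) := hsumq
    _ = L * Real.log 2 + L * (Real.log (L + 1) - Real.log L) + Real.log (L + 1) := by
        rw [hlog1θ, hlogθ2]; ring
    _ ≤ L * Real.log 2 + 1 + Real.log (L + 1) := by linarith

/-- For any injective compressor `C : A → {0,1}*` and any random variable `X`
on the finite set `A` with pmf `p`, the expected codeword length satisfies
`E[ℓ(C(X))] ≥ H(X) - log(e(H(X)+1))` (entropy in bits). -/
theorem injective_compressor_lower_bound {A : Type*} [Fintype A]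
    (p : A → ℝ) (hp0 : ∀ a, 0 ≤ p a) (hp1 : ∑ a, p a = 1)
    (C : A → List Bool) (hC : Function.Injective C) :
    (-∑ a, p a * Real.logb 2 (p a))
        - Real.logb 2 (Real.exp 1 * ((-∑ a, p a * Real.logb 2 (p a)) + 1))
      ≤ ∑ a, p a * ((C a).length : ℝ) := by
  classical
  set H : ℝ := -∑ a, p a * Real.logb 2 (p a) with hHdef
  set L : ℝ := ∑ a, p a * ((C a).length : ℝ) with hLdef
  have hb2 : (1:ℝ) < 2 := by norm_num
  have hpa1 : ∀ a, p a ≤ 1 := by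
    intro a
    rw [← hp1]
    exact Finset.single_le_sum (fun b _ => hp0 b) (Finset.mem_univ a)
  have hH0 : 0 ≤ H := by
    rw [hHdef, neg_nonneg]
    apply Finset.sum_nonpos
    intro a _
    rcases eq_or_lt_of_le (hp0 a) with h | h
    · simp [← h]
    · exact mul_nonpos_of_nonneg_of_nonpos (hp0 a)
        (Real.logb_nonpos hb2 (hp0 a) (hpa1 a))
  have hL0 : 0 ≤ L :=
    Finset.sum_nonneg (fun a _ => mul_nonneg (hp0 a) (Nat.cast_nonneg _))
  have hexp1 : (1:ℝ) ≤ Real.exp 1 := by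
    have := Real.exp_one_gt_d9; linarith
  -- Key inequality: H ≤ L + logb 2 (e (L+1))
  have key : H ≤ L + Real.logb 2 (Real.exp 1 * (L + 1)) := by
    rcases eq_or_lt_of_le hL0 with hLzero | hLpos
    · -- L = 0 : show H = 0.
      have hLz : ∑ a, p a * ((C a).length : ℝ) = 0 := by rw [← hLdef]; exact hLzero.symm
      have hterm : ∀ a ∈ Finset.univ, p a * ((C a).length : ℝ) = 0 :=
        (Finset.sum_eq_zero_iff_of_nonneg
          (fun a _ => mul_nonneg (hp0 a) (Nat.cast_nonneg _))).mp hLz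
      have hnil : ∀ a, p a ≠ 0 → C a = [] := by
        intro a hpa
        rcases mul_eq_zero.mp (hterm a (Finset.mem_univ a)) with h | h
        · exact absurd h hpa
        · exact List.length_eq_zero_iff.mp (by exact_mod_cast h)
      have hHzero : H = 0 := by
        rw [hHdef, neg_eq_zero]
        apply Finset.sum_eq_zero
        intro a _
        by_cases hpa : p a = 0
        · simp [hpa]
        · have hpa1' : p a = 1 := by
            rw [← hp1, Finset.sum_eq_single a]
            · intro b _ hb
              by_contra hpb
              exact hb (hC (((hnil b hpb).trans (hnil a hpa).symm)))
            · intro h; exact absurd (Finset.mem_univ a) h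
          rw [hpa1', Real.logb_one, mul_zero]
      rw [hHzero, ← hLzero]
      have : 0 ≤ Real.logb 2 (Real.exp 1 * (0 + 1)) :=
        Real.logb_nonneg hb2 (by nlinarith)
      linarith
    · have hnat := key_nats p hp0 hp1 C hC hLpos
      have hlog2 : 0 < Real.log 2 := Real.log_pos hb2
      have hHeq : H = (-∑ a, p a * Real.log (p a)) / Real.log 2 := by
        rw [hHdef, neg_div]
        congr 1
        rw [Finset.sum_div]
        exact Finset.sum_congr rfl (fun a _ => by rw [Real.logb, mul_div_assoc])
      have hlogbeq : Real.logb 2 (Real.exp 1 * (L + 1))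
          = (1 + Real.log (L + 1)) / Real.log 2 := by
        rw [Real.logb, Real.log_mul (ne_of_gt (Real.exp_pos 1)) (by positivity),
          Real.log_exp]
      rw [hHeq, hlogbeq, div_le_iff₀ hlog2]
      have heq : (L + (1 + Real.log (L + 1)) / Real.log 2) * Real.log 2
          = L * Real.log 2 + (1 + Real.log (L + 1)) := by
        field_simp
      rw [heq]
      linarith [hnat]
  rcases le_or_gt H L with h | h
  · have : 0 ≤ Real.logb 2 (Real.exp 1 * (H + 1)) :=
      Real.logb_nonneg hb2 (by nlinarith)
    linarith
  · have hmono : Real.logb 2 (Real.exp 1 * (L + 1))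
        ≤ Real.logb 2 (Real.exp 1 * (H + 1)) := by
      apply (Real.logb_le_logb hb2 (by positivity) (by positivity)).mpr
      nlinarith [hexp1]
    linarith
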